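/- Let G be a vertex-minimal toroidal graph admitting no proper odd colouring with at most 9 colours. Then G has minimum degree at least 5. -/

import Mathlib

open scoped Classical
open Finset

/-- The colouring `c` is *odd at* `v`: some colour appears an odd number of
times in the neighbourhood of `v`. -/
def SimpleGraph.IsOddAt {V α : Type} [Fintype V] (G : SimpleGraph V)
    (c : V → α) (v : V) : Prop :=
  ∃ a : α, Odd ((G.neighborFinset v).filter fun w => c w = a).card

/-- `c` is a proper odd vertex-colouring of `G`. -/
def SimpleGraph.IsProperOdd {V α : Type} [Fintype V] (G : SimpleGraph V)
    (c : V → α) : Prop :=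
  (∀ u w : V, G.Adj u w → c u ≠ c w) ∧
  ∀ v : V, 0 < G.degree v → G.IsOddAt c v

/-- `G` has a proper odd colouring with at most 9 colours. -/
def SimpleGraph.HasNice {V : Type} [Fintype V] (G : SimpleGraph V) : Prop :=
  ∃ c : V → Fin 9, G.IsProperOdd c

lemma aux_exists_color (F : Finset (Fin 9)) (h : F.card < 9) : ∃ b, b ∉ F := by
  by_contra hb
  push_neg at hb
  have : F = Finset.univ := Finset.eq_univ_iff_forall.2 hb
  simp [this] at h

lemma aux_filter_card_split {V : Type} [Fintype V] [DecidableEq V] (s : Finset V) (v : V)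
    (hv : v ∈ s) (c : V → Fin 9) (a : Fin 9) :
    (s.filter fun y => c y = a).card
      = ((s.erase v).filter fun y => c y = a).card + (if c v = a then 1 else 0) := by
  conv_lhs => rw [← Finset.insert_erase hv]
  rw [Finset.filter_insert]
  split_ifs with h
  · rw [Finset.card_insert_of_notMem (by simp)]
  · simp

lemma aux_odd_transfer {V : Type} [Fintype V] [DecidableEq V] {v : V}
    (G : SimpleGraph V) (H : SimpleGraph {x : V // x ≠ v}) (u : V) (hu : u ≠ v)
    (hadj : ∀ y : {x : V // x ≠ v}, H.Adj ⟨u, hu⟩ y ↔ G.Adj u y.1)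
    (hvu : ¬ G.Adj u v)
    (c' : {x : V // x ≠ v} → Fin 9) (c : V → Fin 9)
    (hc : ∀ (x : V) (hx : x ≠ v), c x = c' ⟨x, hx⟩)
    (hodd : H.IsOddAt c' ⟨u, hu⟩) : G.IsOddAt c u := by
  obtain ⟨a, ha⟩ := hodd
  refine ⟨a, ?_⟩
  have hset : (G.neighborFinset u).filter (fun y => c y = a)
      = ((H.neighborFinset ⟨u, hu⟩).filter (fun y => c' y = a)).image Subtype.val := by
    ext y
    simp only [Finset.mem_image, Finset.mem_filter, SimpleGraph.mem_neighborFinset]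
    constructor
    · rintro ⟨hadj', hcy⟩
      have hy : y ≠ v := fun h => hvu (h ▸ hadj')
      exact ⟨⟨y, hy⟩, ⟨(hadj _).2 hadj', by rw [← hc y hy]; exact hcy⟩, rfl⟩
    · rintro ⟨z, ⟨hz, hcz⟩, rfl⟩
      exact ⟨(hadj z).1 hz, by rw [hc z.1 z.2]; exact hcz⟩
  have ha' : Odd ((H.neighborFinset ⟨u, hu⟩).filter (fun y => c' y = a)).card := by
    convert ha using 2
    ext z
    simp [Finset.mem_filter]
  have hmain : Odd ((G.neighborFinset u).filter (fun y => c y = a)).card := by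
    rw [hset, Finset.card_image_of_injective _ Subtype.val_injective]
    exact ha'
  convert hmain using 2
  ext z
  simp [Finset.mem_filter]

theorem min_counterexample_min_degree_ge_five
    (Toroidal : ∀ (W : Type) [Fintype W] [DecidableEq W], SimpleGraph W → Prop)
    {V : Type} [Fintype V] [DecidableEq V] (G : SimpleGraph V)
    (hG : Toroidal V G)
    (hdel : ∀ v : V, Toroidal {x : V // x ≠ v} (G.induce {x : V | x ≠ v}))
    (hmod : ∀ (v w : V) (hvw : G.Adj v w),
      Toroidal {x : V // x ≠ v}
        (SimpleGraph.fromRel fun x y : {x : V // x ≠ v} =>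
          G.Adj x.1 y.1 ∨ (x = ⟨w, hvw.ne'⟩ ∧ G.Adj v y.1)))
    (hno : ¬ G.HasNice)
    (hmin : ∀ (W : Type) [Fintype W] [DecidableEq W] (H : SimpleGraph W),
      Toroidal W H → Fintype.card W < Fintype.card V → H.HasNice) :
    ∀ v : V, 5 ≤ G.degree v := by
  intro v
  by_contra hdeg
  push_neg at hdeg
  have hcard : Fintype.card {x : V // x ≠ v} < Fintype.card V :=
    Fintype.card_subtype_lt (x := v) (by simp)
  rcases Nat.eq_zero_or_pos (G.degree v) with h0 | hpos
  · -- isolated vertex case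
    obtain ⟨c', hcp, hco⟩ := hmin _ (G.induce {x : V | x ≠ v}) (hdel v) hcard
    have hvn : ∀ y, ¬ G.Adj v y := by
      intro y hy
      have hy' : y ∈ G.neighborFinset v := by simpa using hy
      have h2 := Finset.card_pos.mpr ⟨y, hy'⟩
      rw [G.card_neighborFinset_eq_degree] at h2
      omega
    set c : V → Fin 9 := fun x => if h : x = v then 0 else c' ⟨x, h⟩ with hc
    have hcv : ∀ (x : V) (hx : x ≠ v), c x = c' ⟨x, hx⟩ := by
      intro x hx; simp [hc, dif_neg hx]
    refine hno ⟨c, ?_, ?_⟩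
    · intro x y hxy
      have hx : x ≠ v := fun h => hvn y (h ▸ hxy)
      have hy : y ≠ v := fun h => hvn x (h ▸ hxy.symm)
      rw [hcv x hx, hcv y hy]
      exact hcp _ _ (by simpa [SimpleGraph.induce] using hxy :
        (G.induce {x : V | x ≠ v}).Adj ⟨x, hx⟩ ⟨y, hy⟩)
    · intro u hu
      have huv : u ≠ v := by
        intro h; rw [h] at hu; omega
      have hvu : ¬ G.Adj u v := fun h => hvn u h.symm
      have hiff : ∀ y : {x : V // x ≠ v},
          (G.induce {x : V | x ≠ v}).Adj ⟨u, huv⟩ y ↔ G.Adj u y.1 := by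
        intro y
        simp [SimpleGraph.induce]
      refine aux_odd_transfer G _ u huv hiff hvu c' c hcv ?_
      apply hco ⟨u, huv⟩
      obtain ⟨y, hy⟩ := (G.degree_pos_iff_exists_adj u).1 hu
      have hyv : y ≠ v := fun h => hvu (h ▸ hy)
      exact ((G.induce {x : V | x ≠ v}).degree_pos_iff_exists_adj _).2
        ⟨⟨y, hyv⟩, (hiff _).2 hy⟩
  · -- positive degree case
    obtain ⟨w, hw⟩ := (G.degree_pos_iff_exists_adj v).1 hpos
    obtain ⟨c', hcp, hco⟩ := hmin _ _ (hmod v w hw) hcard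
    have hwv : w ≠ v := hw.ne'
    have hAdjH : ∀ (x y : V) (hx : x ≠ v) (hy : y ≠ v), G.Adj x y →
        (SimpleGraph.fromRel fun x y : {x : V // x ≠ v} =>
          G.Adj x.1 y.1 ∨ (x = ⟨w, hw.ne'⟩ ∧ G.Adj v y.1)).Adj ⟨x, hx⟩ ⟨y, hy⟩ := by
      intro x y hx hy hxy
      rw [SimpleGraph.fromRel_adj]
      exact ⟨fun h => hxy.ne (congrArg Subtype.val h), Or.inl (Or.inl hxy)⟩
    have hWadj : ∀ (y : V) (hy : y ≠ v), y ≠ w → G.Adj v y →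
        (SimpleGraph.fromRel fun x y : {x : V // x ≠ v} =>
          G.Adj x.1 y.1 ∨ (x = ⟨w, hw.ne'⟩ ∧ G.Adj v y.1)).Adj ⟨w, hw.ne'⟩ ⟨y, hy⟩ := by
      intro y hy hyw hvy
      rw [SimpleGraph.fromRel_adj]
      exact ⟨fun h => hyw (congrArg Subtype.val h).symm, Or.inl (Or.inr ⟨rfl, hvy⟩)⟩
    set cE : V → Fin 9 := fun x => if h : x = v then 0 else c' ⟨x, h⟩ with hcE
    have hcEv : ∀ (x : V) (hx : x ≠ v), cE x = c' ⟨x, hx⟩ := by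
      intro x hx; simp [hcE, dif_neg hx]
    set Todd : V → Finset (Fin 9) := fun u => Finset.univ.filter fun a : Fin 9 =>
      Odd (((G.neighborFinset u).erase v).filter (fun y => cE y = a)).card with hTodd
    set badF : V → Finset (Fin 9) := fun u => Finset.univ.filter fun a => Todd u = {a}
      with hbadF
    set F : Finset (Fin 9) :=
      (G.neighborFinset v).image cE ∪ (G.neighborFinset v).biUnion badF with hF
    have hdegv : (G.neighborFinset v).card ≤ 4 := by
      rw [G.card_neighborFinset_eq_degree]; omega
    have hFcard : F.card < 9 := by
      have h1 : ((G.neighborFinset v).image cE).card ≤ 4 :=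
        le_trans Finset.card_image_le hdegv
      have h2 : ((G.neighborFinset v).biUnion badF).card ≤ 4 := by
        refine le_trans (Finset.card_biUnion_le_card_mul _ _ 1 ?_) ?_
        · intro u hu
          refine Finset.card_le_one.mpr ?_
          intro a ha b hb
          simp only [hbadF, Finset.mem_filter, Finset.mem_univ, true_and] at ha hb
          exact Finset.singleton_injective (ha.symm.trans hb)
        · rw [mul_one]; exact hdegv
      have := Finset.card_union_le ((G.neighborFinset v).image cE)
        ((G.neighborFinset v).biUnion badF)
      rw [← hF] at this
      omega
    obtain ⟨b, hb⟩ := aux_exists_color F hFcard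
    set c : V → Fin 9 := fun x => if h : x = v then b else c' ⟨x, h⟩ with hc
    have hcv : ∀ (x : V) (hx : x ≠ v), c x = c' ⟨x, hx⟩ := by
      intro x hx; simp [hc, dif_neg hx]
    have hcvb : c v = b := by simp [hc]
    have hccE : ∀ (x : V), x ≠ v → c x = cE x := by
      intro x hx; rw [hcv x hx, hcEv x hx]
    refine hno ⟨c, ?_, ?_⟩
    · -- properness
      intro x y hxy
      by_cases hx : x = v
      · have hvy : G.Adj v y := hx ▸ hxy
        have hy : y ≠ v := hvy.ne'
        have hmem : c y ∈ F := by
          rw [hF]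
          exact Finset.mem_union_left _ (Finset.mem_image.2
            ⟨y, by simpa using hvy, (hccE y hy).symm⟩)
        rw [hx, hcvb]
        exact fun h => hb (h ▸ hmem)
      · by_cases hy : y = v
        · have hvx : G.Adj v x := hy ▸ hxy.symm
          have hmem : c x ∈ F := by
            rw [hF]
            exact Finset.mem_union_left _ (Finset.mem_image.2
              ⟨x, by simpa using hvx, (hccE x hx).symm⟩)
          rw [hy, hcvb]
          exact fun h => hb (h.symm ▸ hmem)
        · rw [hcv x hx, hcv y hy]
          exact hcp _ _ (hAdjH x y hx hy hxy)
    · -- oddness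
      intro u hu
      by_cases huv : u = v
      · -- oddness at v itself
        have hsing : (G.neighborFinset v).filter (fun y => c y = cE w) = {w} := by
          ext y
          simp only [Finset.mem_filter, SimpleGraph.mem_neighborFinset,
            Finset.mem_singleton]
          constructor
          · rintro ⟨hadj, hcy⟩
            by_contra hyw
            have hy : y ≠ v := hadj.ne'
            have h1 : c' ⟨y, hy⟩ = c' ⟨w, hw.ne'⟩ := by
              rw [← hcv y hy, ← hcEv w hw.ne']
              exact hcy
            exact hcp _ _ (hWadj y hy hyw hadj) h1.symm
          · intro hyw
            rw [hyw]
            exact ⟨hw, hccE w hwv⟩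
        have hmain : Odd ((G.neighborFinset v).filter (fun y => c y = cE w)).card := by
          rw [hsing]
          simpa using odd_one
        rw [huv]
        exact ⟨cE w, by convert hmain using 2; ext z; simp [Finset.mem_filter]⟩
      · by_cases hadjuv : G.Adj u v
        · -- u is a neighbour of v
          have hvmem : v ∈ G.neighborFinset u := by simpa using hadjuv
          have hkey : ∀ a : Fin 9, ((G.neighborFinset u).filter fun y => c y = a).card
              = (((G.neighborFinset u).erase v).filter fun y => cE y = a).card
                + (if b = a then 1 else 0) := by
            intro a
            rw [aux_filter_card_split _ v hvmem c a, hcvb]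
            have heq : ((G.neighborFinset u).erase v).filter (fun y => c y = a)
                = ((G.neighborFinset u).erase v).filter (fun y => cE y = a) :=
              Finset.filter_congr fun y hy => by
                rw [hccE y (Finset.mem_erase.1 hy).1]
            rw [heq]
          have humem : u ∈ G.neighborFinset v := by simpa using hadjuv.symm
          have hTu : Todd u ≠ {b} := by
            intro hT
            apply hb
            rw [hF]
            refine Finset.mem_union_right _ (Finset.mem_biUnion.2 ⟨u, humem, ?_⟩)
            simp only [hbadF, Finset.mem_filter, Finset.mem_univ, true_and]
            exact hT
          by_cases hbT : b ∈ Todd u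
          · have hex : ∃ a ∈ Todd u, a ≠ b := by
              by_contra hco2
              push_neg at hco2
              exact hTu (Finset.eq_singleton_iff_unique_mem.2 ⟨hbT, hco2⟩)
            obtain ⟨a, haT, hab⟩ := hex
            have haodd : Odd
                (((G.neighborFinset u).erase v).filter (fun y => cE y = a)).card := by
              rw [hTodd] at haT
              simpa only [Finset.mem_filter, Finset.mem_univ, true_and] using haT
            have hmain : Odd ((G.neighborFinset u).filter (fun y => c y = a)).card := by
              rw [hkey a, if_neg (fun h => hab h.symm), add_zero]
              exact haodd
            exact ⟨a, by convert hmain using 2; ext z; simp [Finset.mem_filter]⟩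
          · have hnodd : ¬ Odd
                (((G.neighborFinset u).erase v).filter (fun y => cE y = b)).card := by
              rw [hTodd] at hbT
              simpa only [Finset.mem_filter, Finset.mem_univ, true_and] using hbT
            have heven := Nat.not_odd_iff_even.1 hnodd
            have hmain : Odd ((G.neighborFinset u).filter (fun y => c y = b)).card := by
              rw [hkey b, if_pos rfl]
              exact heven.add_one
            exact ⟨b, by convert hmain using 2; ext z; simp [Finset.mem_filter]⟩
        · -- u is not a neighbour of v: transfer from the modified graph
          have huw : u ≠ w := fun h => hadjuv (h ▸ hw.symm)
          have hvu' : ¬ G.Adj v u := fun h => hadjuv h.symm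
          have hiff : ∀ y : {x : V // x ≠ v},
              (SimpleGraph.fromRel fun x y : {x : V // x ≠ v} =>
                G.Adj x.1 y.1 ∨ (x = ⟨w, hw.ne'⟩ ∧ G.Adj v y.1)).Adj ⟨u, huv⟩ y
                ↔ G.Adj u y.1 := by
            intro y
            rw [SimpleGraph.fromRel_adj]
            constructor
            · rintro ⟨hne, (h | ⟨h1, h2⟩) | (h | ⟨h1, h2⟩)⟩
              · exact h
              · exact absurd (congrArg Subtype.val h1) huw
              · exact h.symm
              · exact absurd h2 hvu'
            · intro h
              exact ⟨fun he => h.ne (congrArg Subtype.val he), Or.inl (Or.inl h)⟩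
          refine aux_odd_transfer G _ u huv hiff hadjuv c' c hcv ?_
          apply hco ⟨u, huv⟩
          obtain ⟨y, hy⟩ := (G.degree_pos_iff_exists_adj u).1 hu
          have hyv : y ≠ v := fun h => hadjuv (h ▸ hy)
          convert ((SimpleGraph.fromRel _).degree_pos_iff_exists_adj ⟨u, huv⟩).2
            ⟨⟨y, hyv⟩, (hiff ⟨y, hyv⟩).2 hy⟩
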